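/- Let A be a real n×n matrix and let μ > 0 be a scalar such that every eigenvalue λ ∈ ℂ of A (i.e., every complex root of the characteristic polynomial of A) satisfies Re(λ) < −μ. Then there exists a symmetric positive definite real n×n matrix P such that AᵀP + PA ≼ −2μP, i.e., the symmetric matrix −(AᵀP + PA + 2μP) is positive semidefinite. -/

import Mathlib

open Matrix Filter Polynomial
open scoped NNReal ENNReal Topology ComplexOrder

attribute [local instance] Matrix.linftyOpNormedAddCommGroup Matrix.linftyOpNormedRing
  Matrix.linftyOpNormedAlgebra

namespace LyapunovAux

variable {n : ℕ}

lemma eval_charpoly' (M : Matrix (Fin n) (Fin n) ℂ) (z : ℂ) :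
    M.charpoly.eval z = (z • (1 : Matrix (Fin n) (Fin n) ℂ) - M).det := by
  rw [Matrix.charpoly, ← Polynomial.coe_evalRingHom, RingHom.map_det]
  congr 1
  ext i j
  by_cases h : i = j <;>
    simp [Matrix.charmatrix_apply, h, Matrix.one_apply, Matrix.smul_apply, Matrix.diagonal]

lemma mem_spectrum_iff_root (M : Matrix (Fin n) (Fin n) ℂ) (z : ℂ) :
    z ∈ spectrum ℂ M ↔ M.charpoly.IsRoot z := by
  rw [spectrum.mem_iff, Polynomial.IsRoot, eval_charpoly']
  rw [Algebra.algebraMap_eq_smul_one]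
  constructor
  · intro h
    by_contra hd
    exact h ((Matrix.isUnit_iff_isUnit_det _).mpr (isUnit_iff_ne_zero.mpr hd))
  · intro h hu
    exact ((Matrix.isUnit_iff_isUnit_det _).mp hu).ne_zero h

lemma star_dot_self_eq (v : Fin n → ℂ) :
    star v ⬝ᵥ v = ((∑ i, Complex.normSq (v i) : ℝ) : ℂ) := by
  push_cast
  simp [dotProduct, Complex.normSq_eq_conj_mul_self]

lemma specrad_lt_one (M : Matrix (Fin n) (Fin n) ℂ)
    (h : ∀ z ∈ spectrum ℂ M, ‖z‖₊ < 1) : spectralRadius ℂ M < 1 := by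
  rcases Set.eq_empty_or_nonempty (spectrum ℂ M) with he | hne
  · simp [spectralRadius, he]
  · exact_mod_cast spectrum.spectralRadius_lt_of_forall_lt_of_nonempty hne h

lemma exists_pow_bound (M : Matrix (Fin n) (Fin n) ℂ)
    (h : spectralRadius ℂ M < 1) :
    ∃ r : ℝ≥0, r < 1 ∧ ∀ᶠ k in atTop, ‖M ^ k‖₊ ≤ r ^ k := by
  obtain ⟨r, hr1, hr2⟩ := ENNReal.lt_iff_exists_nnreal_btwn.mp h
  refine ⟨r, by exact_mod_cast hr2, ?_⟩
  have ht := spectrum.pow_nnnorm_pow_one_div_tendsto_nhds_spectralRadius M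
  have hev : ∀ᶠ k : ℕ in atTop, (‖M ^ k‖₊ : ℝ≥0∞) ^ (1 / (k:ℝ)) < r :=
    ht.eventually_lt_const hr1
  filter_upwards [hev, eventually_ge_atTop 1] with k hk hk1
  have hk0 : (k : ℝ) ≠ 0 := by positivity
  have h2 := ENNReal.rpow_le_rpow hk.le (by positivity : (0:ℝ) ≤ (k:ℝ))
  rw [← ENNReal.rpow_mul, one_div, inv_mul_cancel₀ hk0, ENNReal.rpow_one,
    ENNReal.rpow_natCast] at h2
  exact_mod_cast h2

lemma spec_conjTranspose (M : Matrix (Fin n) (Fin n) ℂ)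
    (h : ∀ z ∈ spectrum ℂ M, ‖z‖₊ < 1) :
    ∀ z ∈ spectrum ℂ Mᴴ, ‖z‖₊ < 1 := by
  intro z hz
  rw [spectrum.mem_iff, Algebra.algebraMap_eq_smul_one] at hz
  have hst : (star z) ∈ spectrum ℂ M := by
    rw [spectrum.mem_iff, Algebra.algebraMap_eq_smul_one]
    intro hun
    apply hz
    have e : z • (1 : Matrix (Fin n) (Fin n) ℂ) - Mᴴ
        = (star z • (1 : Matrix (Fin n) (Fin n) ℂ) - M)ᴴ := by
      rw [conjTranspose_sub, conjTranspose_smul, conjTranspose_one, star_star]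
    rw [e, ← Matrix.star_eq_conjTranspose]
    exact hun.star
  simpa using h _ hst

lemma summable_main (M : Matrix (Fin n) (Fin n) ℂ)
    (h : ∀ z ∈ spectrum ℂ M, ‖z‖₊ < 1) :
    Summable (fun k : ℕ => (M ^ k)ᴴ * M ^ k) := by
  obtain ⟨r1, hr1, hb1⟩ := exists_pow_bound M (specrad_lt_one M h)
  obtain ⟨r2, hr2, hb2⟩ := exists_pow_bound Mᴴ (specrad_lt_one Mᴴ (spec_conjTranspose M h))
  apply Summable.of_norm_bounded_eventually_nat (g := fun k => ((r2 * r1 : ℝ≥0) : ℝ) ^ k)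
  · apply summable_geometric_of_lt_one (by positivity)
    have h1 : (r1 : ℝ) < 1 := by exact_mod_cast hr1
    have h2 : (r2 : ℝ) < 1 := by exact_mod_cast hr2
    have hn1 : (0:ℝ) ≤ r1 := r1.coe_nonneg
    have hn2 : (0:ℝ) ≤ r2 := r2.coe_nonneg
    push_cast
    nlinarith
  · filter_upwards [hb1, hb2] with k h1 h2
    calc ‖(M ^ k)ᴴ * M ^ k‖ ≤ ‖(M ^ k)ᴴ‖ * ‖M ^ k‖ := norm_mul_le _ _
      _ = ‖(Mᴴ) ^ k‖ * ‖M ^ k‖ := by rw [conjTranspose_pow]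
      _ ≤ (r2 : ℝ) ^ k * (r1 : ℝ) ^ k := by
          apply mul_le_mul ?_ ?_ (norm_nonneg _) (by positivity)
          · exact_mod_cast h2
          · exact_mod_cast h1
      _ = ((r2 * r1 : ℝ≥0) : ℝ) ^ k := by push_cast; ring

lemma spec_lemma (B : Matrix (Fin n) (Fin n) ℂ)
    (hB : ∀ z ∈ spectrum ℂ B, z.re < 0) :
    ∃ u : (Matrix (Fin n) (Fin n) ℂ)ˣ, (↑u : Matrix (Fin n) (Fin n) ℂ) = 1 - B ∧
      ∀ z ∈ spectrum ℂ ((1 + B) * (↑u⁻¹ : Matrix (Fin n) (Fin n) ℂ)), ‖z‖₊ < 1 := by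
  have hu : IsUnit ((1 : Matrix (Fin n) (Fin n) ℂ) - B) := by
    by_contra h
    have h1 : (1 : ℂ) ∈ spectrum ℂ B := by
      rw [spectrum.mem_iff, _root_.map_one]; exact h
    have := hB 1 h1
    norm_num at this
  obtain ⟨u, hu⟩ := hu
  refine ⟨u, hu, ?_⟩
  set M : Matrix (Fin n) (Fin n) ℂ := (1 + B) * (↑u⁻¹ : Matrix (Fin n) (Fin n) ℂ) with hM
  have hMD : M * (1 - B) = 1 + B := by
    rw [← hu, hM, mul_assoc, Units.inv_mul, mul_one]
  intro z hz
  by_contra hge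
  push_neg at hge
  rw [spectrum.mem_iff, Algebra.algebraMap_eq_smul_one] at hz
  have h1 : (z • (1 : Matrix (Fin n) (Fin n) ℂ) - M) * (↑u : Matrix (Fin n) (Fin n) ℂ)
      = (z - 1) • 1 - (z + 1) • B := by
    rw [hu, sub_mul, hMD, smul_mul_assoc, one_mul, smul_sub, sub_smul, add_smul, one_smul]
    module
  have heq : z • (1 : Matrix (Fin n) (Fin n) ℂ) - M
      = ((z - 1) • 1 - (z + 1) • B) * (↑u⁻¹ : Matrix (Fin n) (Fin n) ℂ) := by
    calc z • (1 : Matrix (Fin n) (Fin n) ℂ) - M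
        = ((z • (1 : Matrix (Fin n) (Fin n) ℂ) - M) * (↑u : Matrix (Fin n) (Fin n) ℂ))
            * (↑u⁻¹ : Matrix (Fin n) (Fin n) ℂ) := by
          rw [mul_assoc, Units.mul_inv, mul_one]
      _ = ((z - 1) • 1 - (z + 1) • B) * (↑u⁻¹ : Matrix (Fin n) (Fin n) ℂ) := by rw [h1]
  have hnu : ¬ IsUnit ((z - 1) • (1 : Matrix (Fin n) (Fin n) ℂ) - (z + 1) • B) := by
    intro h
    apply hz
    rw [heq]
    exact h.mul (Units.isUnit u⁻¹)
  by_cases hz1 : z = -1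
  · apply hnu
    have e : (z - 1) • (1 : Matrix (Fin n) (Fin n) ℂ) - (z + 1) • B
        = (-2 : ℂ) • (1 : Matrix (Fin n) (Fin n) ℂ) := by
      rw [hz1]; norm_num
    rw [e, Matrix.isUnit_iff_isUnit_det, Matrix.det_smul, det_one, mul_one]
    exact IsUnit.pow _ (isUnit_iff_ne_zero.mpr (by norm_num : (-2:ℂ) ≠ 0))
  · have hz1' : z + 1 ≠ 0 := fun h => hz1 (by linear_combination h)
    set w : ℂ := (z - 1) / (z + 1) with hw
    have hfac : (z - 1) • (1 : Matrix (Fin n) (Fin n) ℂ) - (z + 1) • B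
        = (z + 1) • (w • 1 - B) := by
      rw [smul_sub, smul_smul, hw, mul_div_cancel₀ _ hz1']
    have hwspec : w ∈ spectrum ℂ B := by
      rw [spectrum.mem_iff, Algebra.algebraMap_eq_smul_one]
      intro h
      apply hnu
      rw [hfac]
      have e2 : (z + 1) • (w • (1 : Matrix (Fin n) (Fin n) ℂ) - B)
          = ((z + 1) • (1 : Matrix (Fin n) (Fin n) ℂ)) * (w • 1 - B) := by
        rw [smul_mul_assoc, one_mul]
      rw [e2]
      refine IsUnit.mul ?_ h
      rw [Matrix.isUnit_iff_isUnit_det, Matrix.det_smul, det_one, mul_one]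
      exact IsUnit.pow _ (isUnit_iff_ne_zero.mpr hz1')
    have hwre : 0 ≤ w.re := by
      rw [hw, Complex.div_re, ← add_div]
      have h1' : 1 ≤ Complex.normSq z := by
        have h' : 1 ≤ ‖z‖ := by exact_mod_cast hge
        have h2 := Complex.sq_norm z
        nlinarith
      have h2 : (z - 1).re * (z + 1).re + (z - 1).im * (z + 1).im
          = Complex.normSq z - 1 := by
        simp [Complex.normSq_apply]
        ring
      rw [h2]
      exact div_nonneg (by linarith) (Complex.normSq_nonneg _)
    exact absurd (hB w hwspec) (by linarith)

noncomputable def evalLM (x : Fin n → ℂ) : Matrix (Fin n) (Fin n) ℂ →ₗ[ℂ] ℂ where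
  toFun X := star x ⬝ᵥ (X *ᵥ x)
  map_add' X Y := by simp [Matrix.add_mulVec]
  map_smul' c X := by simp [Matrix.smul_mulVec]

noncomputable def ctLM : Matrix (Fin n) (Fin n) ℂ →ₗ[ℝ] Matrix (Fin n) (Fin n) ℂ where
  toFun X := Xᴴ
  map_add' X Y := conjTranspose_add X Y
  map_smul' r X := by ext i j; simp [conjTranspose_apply]

lemma core (B : Matrix (Fin n) (Fin n) ℂ)
    (hB : ∀ z ∈ spectrum ℂ B, z.re < 0) :
    ∃ P : Matrix (Fin n) (Fin n) ℂ, P.PosDef ∧ (-(Bᴴ * P + P * B)).PosSemidef := by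
  obtain ⟨u, hu, hspecM⟩ := spec_lemma B hB
  obtain ⟨M, hM⟩ : ∃ M : Matrix (Fin n) (Fin n) ℂ,
      M = (1 + B) * (↑u⁻¹ : Matrix (Fin n) (Fin n) ℂ) := ⟨_, rfl⟩
  rw [← hM] at hspecM
  have hMD : M * (1 - B) = 1 + B := by
    rw [← hu, hM, mul_assoc, Units.inv_mul, mul_one]
  have hsum := summable_main M hspecM
  obtain ⟨P, hP⟩ : ∃ P : Matrix (Fin n) (Fin n) ℂ,
      HasSum (fun k : ℕ => (M ^ k)ᴴ * M ^ k) P := ⟨_, hsum.hasSum⟩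
  -- Hermitian
  have hherm : P.IsHermitian := by
    have h1 := ((ctLM (n := n)).toContinuousLinearMap).hasSum hP
    have h2 : (fun k : ℕ => (ctLM (n := n)).toContinuousLinearMap ((M ^ k)ᴴ * M ^ k))
        = fun k : ℕ => (M ^ k)ᴴ * M ^ k := by
      funext k
      show ((M ^ k)ᴴ * M ^ k)ᴴ = _
      rw [conjTranspose_mul, conjTranspose_conjTranspose]
    rw [h2] at h1
    exact h1.unique hP
  -- discrete Lyapunov identity
  have hMPM : Mᴴ * P * M = P - 1 := by
    have h1 := (hP.mul_left Mᴴ).mul_right M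
    have h2 : (fun k : ℕ => Mᴴ * ((M ^ k)ᴴ * M ^ k) * M)
        = fun k : ℕ => (M ^ (k+1))ᴴ * M ^ (k+1) := by
      funext k
      rw [pow_succ, conjTranspose_mul]
      noncomm_ring
    rw [h2] at h1
    have h3 : HasSum (fun k : ℕ => (M ^ (k+1))ᴴ * M ^ (k+1)) (P - 1) := by
      rw [hasSum_nat_add_iff (f := fun k : ℕ => (M ^ k)ᴴ * M ^ k) 1]
      simpa using hP
    exact h1.unique h3
  -- quadratic form sums
  have hQF : ∀ x : Fin n → ℂ,
      HasSum (fun k : ℕ => ((∑ i, Complex.normSq ((M ^ k *ᵥ x) i) : ℝ) : ℂ))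
        (star x ⬝ᵥ (P *ᵥ x)) := by
    intro x
    have h1 := ((evalLM x).toContinuousLinearMap).hasSum hP
    have h2 : (fun k : ℕ => (evalLM x).toContinuousLinearMap ((M ^ k)ᴴ * M ^ k))
        = fun k : ℕ => ((∑ i, Complex.normSq ((M ^ k *ᵥ x) i) : ℝ) : ℂ) := by
      funext k
      show star x ⬝ᵥ (((M ^ k)ᴴ * M ^ k) *ᵥ x) = _
      rw [← mulVec_mulVec, dotProduct_mulVec, ← star_mulVec]
      exact star_dot_self_eq _
    rwa [h2] at h1
  have hre : ∀ x : Fin n → ℂ,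
      HasSum (fun k : ℕ => ∑ i, Complex.normSq ((M ^ k *ᵥ x) i))
        ((star x ⬝ᵥ (P *ᵥ x)).re) := by
    intro x
    have h1 := Complex.reCLM.hasSum (hQF x)
    simpa using h1
  have him : ∀ x : Fin n → ℂ, (star x ⬝ᵥ (P *ᵥ x)).im = 0 := by
    intro x
    have h1 := Complex.imCLM.hasSum (hQF x)
    have h2 : (fun k : ℕ => Complex.imCLM ((∑ i, Complex.normSq ((M ^ k *ᵥ x) i) : ℝ) : ℂ))
        = fun _ : ℕ => (0:ℝ) := by
      funext k; simp
    rw [h2] at h1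
    exact (h1.unique hasSum_zero)
  have hPD : P.PosDef := by
    refine PosDef.of_dotProduct_mulVec_pos hherm (fun x hx => ?_)
    rw [Complex.lt_def]
    refine ⟨?_, (him x).symm⟩
    simp only [Complex.zero_re, Complex.zero_im]
    have hle : ∑ i, Complex.normSq ((M ^ 0 *ᵥ x) i) ≤ (star x ⬝ᵥ (P *ᵥ x)).re :=
      le_hasSum (hre x) 0 fun k _ =>
        Finset.sum_nonneg fun i _ => Complex.normSq_nonneg _
    have hpos : 0 < ∑ i, Complex.normSq ((M ^ 0 *ᵥ x) i) := by
      obtain ⟨i, hi⟩ := Function.ne_iff.mp hx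
      apply Finset.sum_pos' (fun j _ => Complex.normSq_nonneg _)
      exact ⟨i, Finset.mem_univ i,
        by simpa [pow_zero, Matrix.one_mulVec] using Complex.normSq_pos.mpr hi⟩
    linarith
  refine ⟨P, hPD, ?_⟩
  have e2 : (1-B)ᴴ * (Mᴴ * P * M) * (1-B) = (1+B)ᴴ * P * (1+B) := by
    calc (1-B)ᴴ * (Mᴴ * P * M) * (1-B) = (M * (1-B))ᴴ * P * (M * (1-B)) := by
          rw [conjTranspose_mul]; noncomm_ring
      _ = _ := by rw [hMD]
  have hfinal : -(Bᴴ * P + P * B) = (2⁻¹ : ℂ) • ((1-B)ᴴ * (1-B)) := by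
    have e4 : (1-B)ᴴ * (1-B) = (1-B)ᴴ * P * (1-B) - (1-B)ᴴ * (Mᴴ * P * M) * (1-B) := by
      rw [hMPM]; noncomm_ring
    have e5 : (1-B)ᴴ * P * (1-B) - (1+B)ᴴ * P * (1+B)
        = -(Bᴴ * P + P * B) - (Bᴴ * P + P * B) := by
      simp only [conjTranspose_sub, conjTranspose_add, conjTranspose_one]
      noncomm_ring
    rw [e4, e2, e5]
    module
  rw [hfinal]
  have hN := Matrix.posSemidef_conjTranspose_mul_self (1 - B)
  have hc : (0:ℂ) ≤ 2⁻¹ := by rw [Complex.le_def]; norm_num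
  refine PosSemidef.of_dotProduct_mulVec_nonneg ?_ (fun x => ?_)
  · show ((2⁻¹ : ℂ) • ((1-B)ᴴ * (1-B)))ᴴ = _
    rw [conjTranspose_smul, hN.1.eq]
    norm_num
  · rw [Matrix.smul_mulVec, dotProduct_smul, smul_eq_mul]
    exact mul_nonneg hc (hN.dotProduct_mulVec_nonneg x)

lemma quad_re (Q : Matrix (Fin n) (Fin n) ℂ) (x : Fin n → ℝ) :
    x ⬝ᵥ ((Q.map Complex.re) *ᵥ x)
      = ((star (fun i => (x i : ℂ))) ⬝ᵥ (Q *ᵥ (fun i => (x i : ℂ)))).re := by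
  simp only [dotProduct, Matrix.mulVec, Matrix.map_apply, Pi.star_apply, RCLike.star_def,
    Complex.conj_ofReal, Complex.re_sum, Complex.mul_re, Complex.ofReal_re, Complex.ofReal_im,
    zero_mul, sub_zero, mul_zero, Finset.mul_sum, Finset.sum_mul]

lemma herm_map_re {Q : Matrix (Fin n) (Fin n) ℂ} (hQ : Q.IsHermitian) :
    (Q.map Complex.re).IsHermitian := by
  ext i j
  have h := congrFun (congrFun hQ.eq i) j
  simp only [conjTranspose_apply, RCLike.star_def] at h ⊢
  rw [Matrix.map_apply, Matrix.map_apply, ← h]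
  simp [Complex.conj_re]

lemma psd_map_re {Q : Matrix (Fin n) (Fin n) ℂ} (hQ : Q.PosSemidef) :
    (Q.map Complex.re).PosSemidef := by
  refine PosSemidef.of_dotProduct_mulVec_nonneg (herm_map_re hQ.1) (fun x => ?_)
  have h := hQ.dotProduct_mulVec_nonneg (fun i => (x i : ℂ))
  rw [Complex.le_def] at h
  simpa [quad_re] using h.1

lemma pd_map_re {Q : Matrix (Fin n) (Fin n) ℂ} (hQ : Q.PosDef) :
    (Q.map Complex.re).PosDef := by
  refine PosDef.of_dotProduct_mulVec_pos (herm_map_re hQ.1) (fun x hx => ?_)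
  have hx' : (fun i => (x i : ℂ)) ≠ 0 := by
    intro h
    apply hx
    funext i
    have h2 := congrFun h i
    simp only [Pi.zero_apply] at h2 ⊢
    exact_mod_cast h2
  have h := hQ.dotProduct_mulVec_pos hx'
  rw [Complex.lt_def] at h
  simpa [quad_re] using h.1

lemma isSymm_of_herm {Q : Matrix (Fin n) (Fin n) ℝ} (h : Q.IsHermitian) : Q.IsSymm := by
  ext i j
  have h2 := congrFun (congrFun h.eq i) j
  simpa [conjTranspose_apply] using h2

end LyapunovAux

open LyapunovAux

/-- Lyapunov inequality with prescribed decay rate (Lemma 2 of the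
paper): if every complex eigenvalue of the real matrix `A` has real part `< -μ`
with `μ > 0`, then there is a symmetric positive definite `P` with
`Aᵀ P + P A ≼ -2μ P`. -/
theorem stmt_1 (n : ℕ) (A : Matrix (Fin n) (Fin n) ℝ) (μ : ℝ) (hμ : 0 < μ)
    (hA : ∀ lam : ℂ, (Matrix.charpoly (A.map Complex.ofReal)).IsRoot lam →
      lam.re < -μ) :
    ∃ P : Matrix (Fin n) (Fin n) ℝ, P.IsSymm ∧ P.PosDef ∧
      (-(Aᵀ * P + P * A + (2 * μ) • P)).PosSemidef := by
  set Ac : Matrix (Fin n) (Fin n) ℂ := A.map Complex.ofReal with hAc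
  set B : Matrix (Fin n) (Fin n) ℂ := Ac + (μ:ℂ) • 1 with hB
  have hspecB : ∀ z ∈ spectrum ℂ B, z.re < 0 := by
    intro z hz
    have hmem : (z - μ) ∈ spectrum ℂ Ac := by
      rw [spectrum.mem_iff, Algebra.algebraMap_eq_smul_one] at hz ⊢
      have e : (z - (μ:ℂ)) • (1 : Matrix (Fin n) (Fin n) ℂ) - Ac
          = z • 1 - (Ac + (μ:ℂ) • 1) := by
        rw [sub_smul]; abel
      rw [e]; exact hz
    have h := hA _ ((mem_spectrum_iff_root Ac _).mp hmem)
    simp only [Complex.sub_re, Complex.ofReal_re] at h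
    linarith
  obtain ⟨Pc, hPc, hPSDc⟩ := core B hspecB
  have hQc : Bᴴ * Pc + Pc * B = Acᴴ * Pc + Pc * Ac + (((2*μ : ℝ)) : ℂ) • Pc := by
    have hct : ((μ:ℂ) • (1 : Matrix (Fin n) (Fin n) ℂ))ᴴ = (μ:ℂ) • 1 := by
      rw [conjTranspose_smul, conjTranspose_one, Complex.star_def, Complex.conj_ofReal]
    rw [hB, conjTranspose_add, hct, add_mul, mul_add, smul_mul_assoc, one_mul,
      mul_smul_comm, mul_one]
    push_cast
    module
  have hmap : (-(Acᴴ * Pc + Pc * Ac + (((2*μ : ℝ)) : ℂ) • Pc)).map Complex.re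
      = -(Aᵀ * (Pc.map Complex.re) + (Pc.map Complex.re) * A
          + (2*μ) • (Pc.map Complex.re)) := by
    ext i j
    simp only [hAc, Matrix.map_apply, Matrix.neg_apply, Matrix.add_apply, Matrix.smul_apply,
      Matrix.mul_apply, Matrix.conjTranspose_apply, Matrix.transpose_apply, RCLike.star_def,
      Complex.conj_ofReal, Complex.neg_re, Complex.add_re, Complex.re_sum, Complex.mul_re,
      Complex.ofReal_re, Complex.ofReal_im, zero_mul, sub_zero, mul_zero, smul_eq_mul,
      Complex.real_smul, Complex.ofReal_mul, Complex.mul_im, add_zero, zero_add]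
  refine ⟨Pc.map Complex.re, isSymm_of_herm (herm_map_re hPc.1), pd_map_re hPc, ?_⟩
  rw [← hmap, ← hQc]
  exact psd_map_re hPSDc
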